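/- For every ε ∈ (0,4], the set W_ε consisting of all finite products of ratios (ε+2m)/(ε+2n) with m,n ∈ ℕ (and, when ε > 2, also integer powers of (ε−2)/ε) is a countable subset of the positive reals that is dense in (0,∞). -/
import Mathlib

/-- The set W_ε of all finite products of ratios (ε+2m)/(ε+2n), m,n ∈ ℕ,
together with (when ε > 2) integer powers of (ε−2)/ε. -/
def Weps (ε : ℝ) : Set ℝ :=
  {x | ∃ (z : ℤ) (k : (ℕ × ℕ) →₀ ℕ), (ε ≤ 2 → z = 0) ∧
    x = ((ε - 2) / ε) ^ z *
      k.prod (fun p e => ((ε + 2 * (p.1 : ℝ)) / (ε + 2 * (p.2 : ℝ))) ^ e)}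

lemma ratio_zpow_mem (ε : ℝ) (hε : 0 < ε) (n : ℕ) (k : ℤ) :
    ((ε + 2 * ((n : ℝ) + 1)) / (ε + 2 * (n : ℝ))) ^ k ∈ Weps ε := by
  have hd : (0:ℝ) < ε + 2 * (n : ℝ) := by positivity
  have hnum : (0:ℝ) < ε + 2 * ((n : ℝ) + 1) := by positivity
  rcases le_or_gt 0 k with hk | hk
  · refine ⟨0, Finsupp.single (n+1, n) k.toNat, fun _ => rfl, ?_⟩
    rw [Finsupp.prod_single_index (by simp)]
    push_cast
    rw [zpow_zero, one_mul, ← zpow_natCast, Int.toNat_of_nonneg hk]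
  · refine ⟨0, Finsupp.single (n, n+1) (-k).toNat, fun _ => rfl, ?_⟩
    rw [Finsupp.prod_single_index (by simp)]
    push_cast
    rw [zpow_zero, one_mul, ← zpow_natCast, Int.toNat_of_nonneg (by omega)]
    rw [show (ε + 2*(n:ℝ)) / (ε + 2*((n:ℝ)+1)) = ((ε + 2*((n:ℝ)+1)) / (ε + 2*(n:ℝ)))⁻¹ by
      rw [inv_div]]
    rw [inv_zpow, ← zpow_neg, neg_neg]

/-- For every ε ∈ (0,4], the set W_ε is a countable subset of the positive reals
that is dense in (0,∞). -/
theorem Weps_countable_subset_dense (ε : ℝ) (hε0 : 0 < ε) (hε4 : ε ≤ 4) :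
    (Weps ε).Countable ∧ Weps ε ⊆ Set.Ioi (0 : ℝ) ∧
    ∀ c d : ℝ, 0 < c → c < d → ∃ x ∈ Weps ε, c < x ∧ x < d := by
  refine ⟨?_, ?_, ?_⟩
  · have h : Weps ε ⊆ Set.range (fun p : ℤ × ((ℕ × ℕ) →₀ ℕ) =>
        ((ε - 2) / ε) ^ p.1 *
          p.2.prod (fun p e => ((ε + 2 * (p.1 : ℝ)) / (ε + 2 * (p.2 : ℝ))) ^ e)) := by
      rintro x ⟨z, k, -, rfl⟩
      exact ⟨(z, k), rfl⟩
    exact (Set.countable_range _).mono h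
  · rintro x ⟨z, k, hz, rfl⟩
    have hprod : 0 < k.prod (fun p e => ((ε + 2 * (p.1 : ℝ)) / (ε + 2 * (p.2 : ℝ))) ^ e) := by
      apply Finset.prod_pos
      intro p _
      have h1 : (0:ℝ) < ε + 2 * (p.1 : ℝ) := by positivity
      have h2 : (0:ℝ) < ε + 2 * (p.2 : ℝ) := by positivity
      positivity
    rcases le_or_gt ε 2 with h | h
    · rw [hz h, zpow_zero, one_mul]; exact hprod
    · have : (0:ℝ) < (ε - 2) / ε := div_pos (by linarith) hε0
      exact Set.mem_Ioi.2 (mul_pos (zpow_pos this z) hprod)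
  · intro c d hc hcd
    have hdc : 1 < d / c := (one_lt_div hc).2 hcd
    set t := Real.sqrt (d / c) with ht
    have ht2 : t ^ 2 = d / c := Real.sq_sqrt (by linarith)
    have ht0 : 0 ≤ t := Real.sqrt_nonneg _
    have ht1 : 1 < t := by nlinarith
    obtain ⟨n, hn⟩ := exists_nat_gt (2 / (t - 1))
    set y := (ε + 2 * ((n : ℝ) + 1)) / (ε + 2 * (n : ℝ)) with hy
    have hd0 : (0:ℝ) < ε + 2 * (n : ℝ) := by positivity
    have hy1 : 1 < y := by
      rw [lt_div_iff₀ hd0]; linarith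
    have hyt : y < t := by
      rw [div_lt_iff₀ hd0]
      have h1 : 2 / (t - 1) < (n : ℝ) := hn
      have h2 : 2 < (t - 1) * (n : ℝ) := by
        rw [div_lt_iff₀ (by linarith)] at h1; linarith [h1]
      nlinarith
    have hy2 : y ^ 2 < d / c := by nlinarith
    obtain ⟨m, hm1, hm2⟩ := exists_mem_Ioc_zpow hc hy1
    have hy0 : (0:ℝ) < y := by linarith
    have hyne : y ≠ 0 := ne_of_gt hy0
    refine ⟨y ^ (m + 2), ratio_zpow_mem ε hε0 n (m + 2), ?_, ?_⟩
    · have he : y ^ (m + 2) = y * y ^ (m + 1) := by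
        rw [← zpow_one_add₀ hyne]; ring_nf
      rw [he]
      have hp : 0 < y ^ (m + 1) := zpow_pos hy0 _
      nlinarith [hm2]
    · have he : y ^ (m + 2) = y ^ (2:ℤ) * y ^ m := by
        rw [← zpow_add₀ hyne]; ring_nf
      rw [he]
      calc y ^ 2 * y ^ m < (d / c) * c :=
            mul_lt_mul'' hy2 hm1 (by positivity) (by positivity)
        _ = d := div_mul_cancel₀ d (ne_of_gt hc)
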